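/- (Flat sections of the Fedosov differential; zeroth cohomology.) Let D = ∇ − δ + A· be a nilpotent Fedosov derivation (D² = 0, with A of y-degree ≥ 2 and δ^{-1}A = 0). Then for every smooth function a₀ ∈ C^∞(ℝ^d) there exists a unique a ∈ Ω⁰ with Da = 0 and σ(a) = a₀; this element τ(a₀) := a is obtained by iterating (in the y-degree) the equation a = a₀ + δ^{-1}(∇a + A·a). The resulting map τ : C^∞(ℝ^d) → {a ∈ Ω⁰ : Da = 0} is bijective, with inverse σ, and is an isomorphism of commutative algebras: τ(a₀ b₀) = τ(a₀) τ(b₀). -/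

import Mathlib

/-!
Coordinate model of the Fedosov resolution on `M = ℝ^d`, following Dolgushev,
"Covariant and equivariant formality theorems".

An element `a : Omega d` represents the exterior form with values in the formally
completed symmetric algebra of the cotangent bundle,
`a = ∑ a_{m,S}(x) y^m dx^S`, where `m` is the multi-index of exponents of the
commuting formal fibre variables `y^1, …, y^d` and `S` is the (increasingly
ordered) set of indices of the anticommuting `dx`'s; `a m S : (Fin d → ℝ) → ℝ`
is the corresponding (smooth) coefficient.
-/

noncomputable section
open scoped BigOperators

namespace FedosovModel

/-- Multi-indices: exponents of the formal fibre variables `y`. -/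
abbrev Mi (d : ℕ) := Fin d →₀ ℕ

/-- The coordinate model of `Ω(ℝ^d, 𝒮M)`: `a m S x` is the coefficient of the
monomial `y^m dx^S` (with the `dx`'s in increasing order) at the point `x`. -/
abbrev Omega (d : ℕ) := Mi d → Finset (Fin d) → (Fin d → ℝ) → ℝ

variable (d : ℕ)

/-- total `y`-degree of a multi-index -/
def ydeg (m : Mi d) : ℕ := ∑ i, m i

/-- all coefficients are smooth functions on `ℝ^d` -/
def Smooth (a : Omega d) : Prop := ∀ m S, ContDiff ℝ (⊤ : ℕ∞) (a m S)

/-- `a` is homogeneous of exterior degree `q`, i.e. `a ∈ Ω^q` -/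
def ExtDeg (q : ℕ) (a : Omega d) : Prop := ∀ m S, S.card ≠ q → a m S = 0

/-- the sign defined by `dx^i ∧ dx^S = sgn i S • dx^{S ∪ {i}}` for `i ∉ S` -/
def sgn (i : Fin d) (S : Finset (Fin d)) : ℝ :=
  (-1 : ℝ) ^ (S.filter (fun j => j < i)).card

/-- the projection `σ(a) = a|_{y = dx = 0}` -/
def sigmaOm (a : Omega d) : (Fin d → ℝ) → ℝ := a 0 ∅

/-- a function on `ℝ^d` viewed as an element of `Ω` with no `y`- and `dx`-dependence -/
def ofFun (f : (Fin d → ℝ) → ℝ) : Omega d :=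
  fun m S => if m = 0 ∧ S = ∅ then f else 0

/-- the differential `δ = dx^i ∂/∂y^i` -/
def deltaOp (a : Omega d) : Omega d := fun m S x =>
  ∑ i ∈ S, sgn d i (S.erase i) * ((m i : ℝ) + 1) *
    a (m + Finsupp.single i 1) (S.erase i) x

/-- the homotopy operator `δ⁻¹`, acting on a component of `y`-degree `p` and
exterior degree `q` with `p + q > 0` as `(p+q)⁻¹ y^k ι(∂/∂x^k)`, and as `0`
on the component `p = q = 0`. -/
def deltaInv (a : Omega d) : Omega d := fun m S x =>
  (((ydeg d m + S.card : ℕ) : ℝ))⁻¹ *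
    ∑ k : Fin d,
      if k ∉ S ∧ 1 ≤ m k then sgn d k S * a (m - Finsupp.single k 1) (insert k S) x
      else 0

/-- partial derivative `∂f/∂x^i` -/
def pd (i : Fin d) (f : (Fin d → ℝ) → ℝ) : (Fin d → ℝ) → ℝ :=
  fun x => fderiv ℝ f x (Pi.single i 1)

/-- Christoffel symbols: `Γ k i j = Γ^k_{ij}` -/
abbrev Christoffel (d : ℕ) := Fin d → Fin d → Fin d → (Fin d → ℝ) → ℝ

def SmoothGamma (Γ : Christoffel d) : Prop := ∀ k i j, ContDiff ℝ (⊤ : ℕ∞) (Γ k i j)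

def TorsionFree (Γ : Christoffel d) : Prop := ∀ k i j, Γ k i j = Γ k j i

/-- the covariant derivative `∇a = dx^i ∂a/∂x^i − dx^i Γ^k_{ij}(x) y^j ∂a/∂y^k` -/
def nablaOp (Γ : Christoffel d) (a : Omega d) : Omega d := fun m S x =>
  ∑ i ∈ S, sgn d i (S.erase i) *
    (pd d i (a m (S.erase i)) x -
      ∑ j : Fin d, ∑ k : Fin d,
        if 1 ≤ m j then
          let m' : Mi d := m + Finsupp.single k 1 - Finsupp.single j 1
          Γ k i j x * ((m' k : ℕ) : ℝ) * a m' (S.erase i) x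
        else 0)

/-- the Riemann curvature tensor
`(R_{ij})^k_l = ∂_i Γ^k_{jl} − ∂_j Γ^k_{il} + Γ^k_{im} Γ^m_{jl} − Γ^k_{jm} Γ^m_{il}` -/
def Riem (Γ : Christoffel d) (i j k l : Fin d) : (Fin d → ℝ) → ℝ := fun x =>
  pd d i (Γ k j l) x - pd d j (Γ k i l) x +
    ∑ mm : Fin d, (Γ k i mm x * Γ mm j l x - Γ k j mm x * Γ mm i l x)

/-- the curvature operator `R·a = −(1/2) dx^i dx^j (R_{ij})^k_l y^l ∂a/∂y^k` -/
def curvAct (Γ : Christoffel d) (a : Omega d) : Omega d := fun m S x =>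
  -(1/2 : ℝ) * ∑ i ∈ S, ∑ j ∈ S.erase i,
    sgn d i (S.erase i) * sgn d j ((S.erase i).erase j) *
      ∑ k : Fin d, ∑ l : Fin d,
        if 1 ≤ m l then
          let m' : Mi d := m + Finsupp.single k 1 - Finsupp.single l 1
          Riem d Γ i j k l x * ((m' k : ℕ) : ℝ) * a m' ((S.erase i).erase j) x
        else 0

/-! ### Fiberwise-vector-field-valued one-forms and the Fedosov differential -/

/-- a fiberwise-vector-field-valued one-form `B = dx^k B^j_k(x,y) ∂/∂y^j`:
`B j k m x` is the coefficient of `dx^k y^m ∂/∂y^j` -/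
abbrev VF1 (d : ℕ) := Fin d → Fin d → Mi d → (Fin d → ℝ) → ℝ

def SmoothVF1 (A : VF1 d) : Prop := ∀ j k m, ContDiff ℝ (⊤ : ℕ∞) (A j k m)

/-- all terms of `A` have `y`-degree at least 2 -/
def LowDegVanish (A : VF1 d) : Prop := ∀ j k m, ydeg d m < 2 → A j k m = 0

/-- the action of a fiberwise-vector-field-valued one-form on `Ω` as an odd
derivation: `A·a = dx^k A^j_k(x,y) ∂a/∂y^j` -/
def vact (A : VF1 d) (a : Omega d) : Omega d := fun m S x =>
  ∑ k ∈ S, sgn d k (S.erase k) *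
    ∑ j : Fin d, ∑ p ∈ Finset.HasAntidiagonal.antidiagonal m,
      A j k p.1 x * ((p.2 j : ℝ) + 1) * a (p.2 + Finsupp.single j 1) (S.erase k) x

/-- the `∂/∂y^j`-component of a fiberwise-vector-field-valued one-form,
as an element of `Ω` -/
def vf1ToOmega (A : VF1 d) (j : Fin d) : Omega d :=
  fun m S x => ∑ k : Fin d, if S = {k} then A j k m x else 0

/-- the connection one-form `Γ = −dx^i Γ^k_{ij}(x) y^j ∂/∂y^k` as a
fiberwise-vector-field-valued one-form -/
def GammaVF (Γ : Christoffel d) : VF1 d := fun jf kx m x =>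
  -∑ l : Fin d, if m = Finsupp.single l 1 then Γ jf kx l x else 0

/-- the `∂/∂y^k`-component of the curvature
`R = −(1/2) dx^i dx^j (R_{ij})^k_l y^l ∂/∂y^k`, as an element of `Ω` -/
def RVForm (Γ : Christoffel d) (kf : Fin d) : Omega d := fun m S x =>
  -(1/2 : ℝ) * ∑ i : Fin d, ∑ j : Fin d,
    (if S = {i, j} ∧ i < j then (1 : ℝ) else if S = {i, j} ∧ j < i then -1 else 0) *
      ∑ l : Fin d, if m = Finsupp.single l 1 then Riem d Γ i j kf l x else 0

/-- the normalization `δ⁻¹ A = 0` (componentwise in the fibre index) -/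
def DeltaInvVanish (A : VF1 d) : Prop := ∀ j, deltaInv d (vf1ToOmega d A j) = 0

/-- the Fedosov derivation `D = ∇ − δ + A·` -/
def Dfed (Γ : Christoffel d) (A : VF1 d) (a : Omega d) : Omega d :=
  nablaOp d Γ a - deltaOp d a + vact d A a

/-- nilpotency of the Fedosov derivation: `D ∘ D = 0` on `Ω` -/
def Nilpotent (Γ : Christoffel d) (A : VF1 d) : Prop :=
  ∀ a : Omega d, Smooth d a → Dfed d Γ A (Dfed d Γ A a) = 0

/-- the fixed-point equation `A = δ⁻¹R + δ⁻¹(∇A + (1/2)[A,A])`, componentwise in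
the fibre index `j`; here `(∇A)^j = dx^i ∂_{x^i}(A^j) + Γ·(A^j) + A·(Γ^j)` and
`((1/2)[A,A])^j = A·(A^j) = dx^k dx^l A^m_k ∂A^j_l/∂y^m`. -/
def FedosovFixedPoint (Γ : Christoffel d) (A : VF1 d) : Prop :=
  ∀ j, vf1ToOmega d A j =
    deltaInv d (RVForm d Γ j) +
      deltaInv d (nablaOp d Γ (vf1ToOmega d A j) +
        vact d A (vf1ToOmega d (GammaVF d Γ) j) +
        vact d A (vf1ToOmega d A j))

/-! ### The supercommutative product on `Ω` -/

/-- sign of `dx^S ∧ dx^T = shuffleSgn S T • dx^{S ∪ T}` for disjoint `S`, `T` -/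
def shuffleSgn (S T : Finset (Fin d)) : ℝ :=
  (-1 : ℝ) ^ ∑ i ∈ S, (T.filter (fun j => j < i)).card

/-- the supercommutative product of `Ω` -/
def mulOm (a b : Omega d) : Omega d := fun m S x =>
  ∑ T ∈ S.powerset, shuffleSgn d T (S \ T) *
    ∑ p ∈ Finset.HasAntidiagonal.antidiagonal m, a p.1 T x * b p.2 (S \ T) x

/-- `a` is the flat section of the Fedosov differential extending `a₀`:
`a ∈ Ω⁰`, `Da = 0`, `σ(a) = a₀`. -/
def IsFlatSection (Γ : Christoffel d) (A : VF1 d) (a₀ : (Fin d → ℝ) → ℝ)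
    (a : Omega d) : Prop :=
  ExtDeg d 0 a ∧ Smooth d a ∧ Dfed d Γ A a = 0 ∧ sigmaOm d a = a₀


section Lemmas
open Finsupp
variable {d : ℕ}

lemma ydeg_add (m n : Mi d) : ydeg d (m + n) = ydeg d m + ydeg d n := by
  simp [ydeg, Finsupp.add_apply, Finset.sum_add_distrib]

lemma ydeg_single (i : Fin d) : ydeg d (Finsupp.single i 1) = 1 := by
  simp [ydeg, Finsupp.single_apply]

lemma sub_single_add {m : Mi d} {k : Fin d} (h : 1 ≤ m k) :
    m - Finsupp.single k 1 + Finsupp.single k 1 = m := by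
  ext i
  simp only [Finsupp.add_apply, Finsupp.tsub_apply, Finsupp.single_apply]
  by_cases hik : k = i
  · subst hik; simpa using Nat.sub_add_cancel h
  · simp [hik]

lemma ydeg_sub_single {m : Mi d} {k : Fin d} (h : 1 ≤ m k) :
    ydeg d (m - Finsupp.single k 1) + 1 = ydeg d m := by
  conv_rhs => rw [← sub_single_add h]
  rw [ydeg_add, ydeg_single]

lemma ydeg_eq_zero {m : Mi d} (h : ydeg d m = 0) : m = 0 := by
  ext i
  have := Finset.sum_eq_zero_iff.mp h i (Finset.mem_univ i)
  simpa using this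

lemma sgn_empty (k : Fin d) : sgn d k ∅ = 1 := by simp [sgn]

lemma sgn_mul_self (i : Fin d) (S : Finset (Fin d)) : sgn d i S * sgn d i S = 1 := by
  rw [sgn, ← pow_add, ← two_mul, pow_mul]
  norm_num

lemma sgn_singleton_mul {k l : Fin d} (h : k ≠ l) :
    sgn d k {l} * sgn d l {k} = -1 := by
  rcases h.lt_or_gt with hkl | hkl
  · rw [sgn, sgn, Finset.filter_singleton, Finset.filter_singleton,
      if_neg (by simp [not_lt.mpr hkl.le]), if_pos (by simpa)]
    simp
  · rw [sgn, sgn, Finset.filter_singleton, Finset.filter_singleton,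
      if_pos (by simpa), if_neg (by simp [not_lt.mpr hkl.le])]
    simp

lemma pd_zero (i : Fin d) : pd d i (fun _ => (0 : ℝ)) = fun _ => 0 := by
  funext x
  simp [pd]

end Lemmas
section Deg
variable {d : ℕ} {Γ : Christoffel d} {A : VF1 d}

lemma extDeg_nabla {b : Omega d} (hb : ExtDeg d 0 b) : ExtDeg d 1 (nablaOp d Γ b) := by
  intro m S hS
  funext x
  show (∑ i ∈ S, _ ) = (0 : ℝ)
  refine Finset.sum_eq_zero fun i hi => ?_
  have hcard : (S.erase i).card ≠ 0 := by
    rw [Finset.card_erase_of_mem hi]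
    have h1 : 1 ≤ S.card := Finset.card_pos.mpr ⟨i, hi⟩
    omega
  have hz : ∀ m' : Mi d, b m' (S.erase i) = 0 := fun m' => hb m' _ hcard
  rw [show b m (S.erase i) = (fun _ => (0:ℝ)) from hz m, pd_zero]
  have hz' : ∀ m' : Mi d, ∀ y, b m' (S.erase i) y = 0 := fun m' y => by rw [hz m']; rfl
  simp [hz']

lemma extDeg_delta {b : Omega d} (hb : ExtDeg d 0 b) : ExtDeg d 1 (deltaOp d b) := by
  intro m S hS
  funext x
  refine Finset.sum_eq_zero fun i hi => ?_
  have hcard : (S.erase i).card ≠ 0 := by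
    rw [Finset.card_erase_of_mem hi]
    have h1 : 1 ≤ S.card := Finset.card_pos.mpr ⟨i, hi⟩
    omega
  rw [show b (m + Finsupp.single i 1) (S.erase i) = 0 from hb _ _ hcard]
  simp

lemma extDeg_vact {b : Omega d} (hb : ExtDeg d 0 b) : ExtDeg d 1 (vact d A b) := by
  intro m S hS
  funext x
  refine Finset.sum_eq_zero fun k hk => ?_
  have hcard : (S.erase k).card ≠ 0 := by
    rw [Finset.card_erase_of_mem hk]
    have h1 : 1 ≤ S.card := Finset.card_pos.mpr ⟨k, hk⟩
    omega
  have : (∑ j : Fin d, ∑ p ∈ Finset.HasAntidiagonal.antidiagonal m,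
      A j k p.1 x * ((p.2 j : ℝ) + 1) * b (p.2 + Finsupp.single j 1) (S.erase k) x) = 0 := by
    refine Finset.sum_eq_zero fun j _ => Finset.sum_eq_zero fun p _ => ?_
    rw [show b (p.2 + Finsupp.single j 1) (S.erase k) = 0 from hb _ _ hcard]
    simp
  rw [this]
  ring

lemma extDeg_deltaInv {c : Omega d} (hc : ExtDeg d 1 c) : ExtDeg d 0 (deltaInv d c) := by
  intro m S hS
  funext x
  show (_ * ∑ k : Fin d, _) = (0:ℝ)
  have : (∑ k : Fin d,
      if k ∉ S ∧ 1 ≤ m k then sgn d k S * c (m - Finsupp.single k 1) (insert k S) x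
      else 0) = 0 := by
    refine Finset.sum_eq_zero fun k _ => ?_
    split
    · next h =>
      rw [show c (m - Finsupp.single k 1) (insert k S) = 0 from
        hc _ _ (by rw [Finset.card_insert_of_notMem h.1]; omega)]
      simp
    · rfl
  rw [this, mul_zero]

lemma extDeg_add {q : ℕ} {a b : Omega d} (ha : ExtDeg d q a) (hb : ExtDeg d q b) :
    ExtDeg d q (a + b) := by
  intro m S hS
  show a m S + b m S = 0
  rw [ha m S hS, hb m S hS, add_zero]

lemma extDeg_ofFun {f : (Fin d → ℝ) → ℝ} : ExtDeg d 0 (ofFun d f) := by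
  intro m S hS
  unfold ofFun
  rw [if_neg]
  rintro ⟨-, rfl⟩
  simp at hS

end Deg
section Local
variable {d : ℕ} {Γ : Christoffel d} {A : VF1 d}

lemma ydeg_addsub {m : Mi d} {j k : Fin d} (h : 1 ≤ m j) :
    ydeg d (m + Finsupp.single k 1 - Finsupp.single j 1) = ydeg d m := by
  have h' : 1 ≤ (m + Finsupp.single k 1 : Mi d) j := by
    rw [Finsupp.add_apply]
    omega
  have := ydeg_sub_single (m := m + Finsupp.single k 1) (k := j) h'
  rw [ydeg_add, ydeg_single] at this
  omega

lemma nabla_congr {b b' : Omega d} {m : Mi d}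
    (h : ∀ m' S', ydeg d m' ≤ ydeg d m → b m' S' = b' m' S') (S : Finset (Fin d)) :
    nablaOp d Γ b m S = nablaOp d Γ b' m S := by
  funext x
  refine Finset.sum_congr rfl fun i _ => ?_
  rw [h m (S.erase i) le_rfl]
  congr 2
  refine Finset.sum_congr rfl fun j _ => Finset.sum_congr rfl fun k _ => ?_
  split
  · next hj =>
    dsimp only
    rw [h _ (S.erase i) (le_of_eq (ydeg_addsub hj))]
  · rfl

lemma vact_congr (hlow : LowDegVanish d A) {b b' : Omega d} {m : Mi d}
    (h : ∀ m' S', ydeg d m' ≤ ydeg d m → b m' S' = b' m' S') (S : Finset (Fin d)) :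
    vact d A b m S = vact d A b' m S := by
  funext x
  refine Finset.sum_congr rfl fun k _ => ?_
  congr 1
  refine Finset.sum_congr rfl fun j _ => Finset.sum_congr rfl fun p hp => ?_
  rw [Finset.HasAntidiagonal.mem_antidiagonal] at hp
  by_cases h2 : ydeg d p.1 < 2
  · rw [hlow j k p.1 h2]
    simp
  · have hdeg : ydeg d (p.2 + Finsupp.single j 1) ≤ ydeg d m := by
      have := ydeg_add p.1 p.2
      rw [hp] at this
      rw [ydeg_add, ydeg_single]
      omega
    rw [h _ (S.erase k) hdeg]

/-- the quadratic part of the iteration map -/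
def Gop (Γ : Christoffel d) (A : VF1 d) (b : Omega d) : Omega d :=
  deltaInv d (nablaOp d Γ b + vact d A b)

lemma Gop_congr (hlow : LowDegVanish d A) {b b' : Omega d} {m : Mi d}
    (h : ∀ m' S', ydeg d m' < ydeg d m → b m' S' = b' m' S') (S : Finset (Fin d)) :
    Gop Γ A b m S = Gop Γ A b' m S := by
  unfold Gop deltaInv
  funext x
  congr 1
  refine Finset.sum_congr rfl fun k _ => ?_
  split
  · next hk =>
    have hlt : ydeg d (m - Finsupp.single k 1) < ydeg d m := by
      have := ydeg_sub_single hk.2; omega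
    have h' : ∀ m' S', ydeg d m' ≤ ydeg d (m - Finsupp.single k 1) → b m' S' = b' m' S' :=
      fun m' S' hm' => h m' S' (lt_of_le_of_lt hm' hlt)
    show sgn d k S * ((nablaOp d Γ b + vact d A b) _ _ x) = _
    rw [show (nablaOp d Γ b + vact d A b) (m - Finsupp.single k 1) (insert k S)
        = (nablaOp d Γ b' + vact d A b') (m - Finsupp.single k 1) (insert k S) by
      show nablaOp d Γ b _ _ + vact d A b _ _ = nablaOp d Γ b' _ _ + vact d A b' _ _
      rw [nabla_congr h', vact_congr hlow h']]
  · rfl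

/-- one step of the iteration -/
def Fop (Γ : Christoffel d) (A : VF1 d) (a₀ : (Fin d → ℝ) → ℝ) (b : Omega d) : Omega d :=
  ofFun d a₀ + Gop Γ A b

lemma Fop_congr (hlow : LowDegVanish d A) {a₀ : (Fin d → ℝ) → ℝ} {b b' : Omega d} {m : Mi d}
    (h : ∀ m' S', ydeg d m' < ydeg d m → b m' S' = b' m' S') (S : Finset (Fin d)) :
    Fop Γ A a₀ b m S = Fop Γ A a₀ b' m S := by
  show ofFun d a₀ m S + Gop Γ A b m S = ofFun d a₀ m S + Gop Γ A b' m S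
  rw [Gop_congr hlow h S]

lemma Gop_zero : Gop Γ A (0 : Omega d) = 0 := by
  funext m S x
  show (_ * ∑ k : Fin d, _) = (0:ℝ)
  have : ∀ k : Fin d, (if k ∉ S ∧ 1 ≤ m k then
      sgn d k S * (nablaOp d Γ (0 : Omega d) + vact d A (0 : Omega d))
        (m - Finsupp.single k 1) (insert k S) x else 0) = 0 := by
    intro k
    split
    · have h1 : ∀ (m' : Mi d) (T : Finset (Fin d)) (y : Fin d → ℝ),
          nablaOp d Γ (0 : Omega d) m' T y = 0 := by
        intro m' T y
        refine Finset.sum_eq_zero fun i _ => ?_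
        rw [show (0 : Omega d) m' (T.erase i) = (fun _ => (0:ℝ)) from rfl, pd_zero]
        simp
      have h2 : ∀ (m' : Mi d) (T : Finset (Fin d)) (y : Fin d → ℝ),
          vact d A (0 : Omega d) m' T y = 0 := by
        intro m' T y
        refine Finset.sum_eq_zero fun k' _ => ?_
        simp [vact]
      show sgn d k S * ((nablaOp d Γ (0:Omega d)) _ _ x + (vact d A (0:Omega d)) _ _ x) = 0
      rw [h1, h2]
      simp
    · rfl
  rw [Finset.sum_congr rfl fun k _ => this k]
  simp

end Local
section Construct
variable {d : ℕ} (Γ : Christoffel d) (A : VF1 d) (a₀ : (Fin d → ℝ) → ℝ)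

lemma iter_agree (hlow : LowDegVanish d A) :
    ∀ p : ℕ, ∀ {n n' : ℕ}, p ≤ n → p ≤ n' → ∀ m S, ydeg d m < p →
      (Fop Γ A a₀)^[n] 0 m S = (Fop Γ A a₀)^[n'] 0 m S := by
  intro p
  induction p with
  | zero => intro n n' _ _ m S h; omega
  | succ p ih =>
    intro n n' hn hn' m S hm
    obtain ⟨n₁, rfl⟩ : ∃ n₁, n = n₁ + 1 := ⟨n - 1, by omega⟩
    obtain ⟨n₂, rfl⟩ : ∃ n₂, n' = n₂ + 1 := ⟨n' - 1, by omega⟩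
    rw [Function.iterate_succ_apply', Function.iterate_succ_apply']
    exact Fop_congr hlow
      (fun m' S' hm' => ih (by omega) (by omega) m' S' (by omega)) S

/-- the flat section, built by iterating the recursion in the `y`-degree -/
def sol : Omega d := fun m S => (Fop Γ A a₀)^[ydeg d m + 1] 0 m S

lemma sol_fixed (hlow : LowDegVanish d A) :
    sol Γ A a₀ = Fop Γ A a₀ (sol Γ A a₀) := by
  funext m S
  show (Fop Γ A a₀)^[ydeg d m + 1] 0 m S = _
  rw [Function.iterate_succ_apply']
  exact Fop_congr hlow (fun m' S' hm' =>
    iter_agree Γ A a₀ hlow (ydeg d m' + 1) (by omega) (by omega) m' S' (by omega)) S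

lemma extDeg_Fop {b : Omega d} (hb : ExtDeg d 0 b) : ExtDeg d 0 (Fop Γ A a₀ b) :=
  extDeg_add extDeg_ofFun
    (extDeg_deltaInv (extDeg_add (extDeg_nabla hb) (extDeg_vact hb)))

lemma extDeg_sol : ExtDeg d 0 (sol Γ A a₀) := by
  have key : ∀ n, ExtDeg d 0 ((Fop Γ A a₀)^[n] 0) := by
    intro n
    induction n with
    | zero => intro m S hS; rfl
    | succ n ih =>
      rw [Function.iterate_succ_apply']
      exact extDeg_Fop Γ A a₀ ih
  intro m S hS
  exact key (ydeg d m + 1) m S hS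

lemma contDiff_pd {f : (Fin d → ℝ) → ℝ} (hf : ContDiff ℝ (⊤ : ℕ∞) f) (i : Fin d) :
    ContDiff ℝ (⊤ : ℕ∞) (pd d i f) := by
  have h1 : ContDiff ℝ (⊤ : ℕ∞) (fderiv ℝ f) := hf.fderiv_right (by exact_mod_cast le_top)
  exact (ContinuousLinearMap.apply ℝ ℝ (Pi.single i 1 : Fin d → ℝ)).contDiff.comp h1

lemma smooth_nabla (hΓ : SmoothGamma d Γ) {b : Omega d} (hb : Smooth d b) :
    Smooth d (nablaOp d Γ b) := by
  intro m S
  unfold nablaOp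
  apply ContDiff.sum
  intro i _
  apply ContDiff.mul contDiff_const
  apply ContDiff.sub (contDiff_pd (hb m (S.erase i)) i)
  apply ContDiff.sum; intro j _
  apply ContDiff.sum; intro k _
  by_cases hj : 1 ≤ m j
  · simp only [if_pos hj]
    exact ((hΓ k i j).mul contDiff_const).mul (hb _ (S.erase i))
  · simp only [if_neg hj]
    exact contDiff_const

lemma smooth_vact (hA : SmoothVF1 d A) {b : Omega d} (hb : Smooth d b) :
    Smooth d (vact d A b) := by
  intro m S
  unfold vact
  apply ContDiff.sum; intro k _
  apply ContDiff.mul contDiff_const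
  apply ContDiff.sum; intro j _
  apply ContDiff.sum; intro p _
  exact ((hA j k p.1).mul contDiff_const).mul (hb _ (S.erase k))

lemma smooth_delta {b : Omega d} (hb : Smooth d b) : Smooth d (deltaOp d b) := by
  intro m S
  unfold deltaOp
  apply ContDiff.sum; intro i _
  exact (contDiff_const.mul contDiff_const).mul (hb _ (S.erase i))

lemma smooth_deltaInv {b : Omega d} (hb : Smooth d b) : Smooth d (deltaInv d b) := by
  intro m S
  unfold deltaInv
  apply ContDiff.mul contDiff_const
  apply ContDiff.sum; intro k _
  by_cases hk : k ∉ S ∧ 1 ≤ m k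
  · simp only [if_pos hk]
    exact contDiff_const.mul (hb _ (insert k S))
  · simp only [if_neg hk]
    exact contDiff_const

lemma smooth_add {b c : Omega d} (hb : Smooth d b) (hc : Smooth d c) : Smooth d (b + c) :=
  fun m S => (hb m S).add (hc m S)

lemma smooth_Fop (hΓ : SmoothGamma d Γ) (hA : SmoothVF1 d A)
    (h₀ : ContDiff ℝ (⊤ : ℕ∞) a₀) {b : Omega d} (hb : Smooth d b) :
    Smooth d (Fop Γ A a₀ b) := by
  apply smooth_add
  · intro m S
    unfold ofFun
    split
    · exact h₀
    · exact contDiff_const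
  · exact smooth_deltaInv (smooth_add (smooth_nabla Γ hΓ hb) (smooth_vact A hA hb))

lemma smooth_zero : Smooth d (0 : Omega d) := fun m S => contDiff_const

lemma smooth_sol (hΓ : SmoothGamma d Γ) (hA : SmoothVF1 d A)
    (h₀ : ContDiff ℝ (⊤ : ℕ∞) a₀) : Smooth d (sol Γ A a₀) := by
  have key : ∀ n, Smooth d ((Fop Γ A a₀)^[n] 0) := by
    intro n
    induction n with
    | zero => exact smooth_zero
    | succ n ih =>
      rw [Function.iterate_succ_apply']
      exact smooth_Fop Γ A a₀ hΓ hA h₀ ih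
  intro m S
  exact key (ydeg d m + 1) m S

lemma sigma_sol : sigmaOm d (sol Γ A a₀) = a₀ := by
  show sol Γ A a₀ 0 ∅ = a₀
  show (Fop Γ A a₀)^[ydeg d (0 : Mi d) + 1] 0 0 ∅ = a₀
  have h0 : ydeg d (0 : Mi d) = 0 := by simp [ydeg]
  rw [h0]
  show Fop Γ A a₀ _ 0 ∅ = a₀
  show ofFun d a₀ 0 ∅ + Gop Γ A _ 0 ∅ = a₀
  rw [Gop_zero]
  unfold ofFun
  simp

end Construct
section Homotopy
variable {d : ℕ}

lemma add_sub_single_self (m : Mi d) (l : Fin d) :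
    m + Finsupp.single l 1 - Finsupp.single l 1 = m := by
  ext i
  simp only [Finsupp.tsub_apply, Finsupp.add_apply, Finsupp.single_apply]
  omega

lemma addsub_comm {m : Mi d} {k : Fin d} (l : Fin d) (hk : 1 ≤ m k) :
    m + Finsupp.single l 1 - Finsupp.single k 1
      = m - Finsupp.single k 1 + Finsupp.single l 1 := by
  ext i
  simp only [Finsupp.tsub_apply, Finsupp.add_apply, Finsupp.single_apply]
  rcases eq_or_ne k i with h1 | h1
  · have hi : 1 ≤ m i := h1 ▸ hk
    rw [if_pos h1]
    split_ifs <;> omega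
  · rw [if_neg h1]
    split_ifs <;> omega

lemma cast_sub_one_add_one {n : ℕ} (h : 1 ≤ n) : ((n - 1 : ℕ) : ℝ) + 1 = (n : ℝ) := by
  rw [← Nat.cast_add_one, Nat.sub_add_cancel h]

lemma ydeg_cast (m : Mi d) : ((ydeg d m : ℕ) : ℝ) = ∑ k : Fin d, ((m k : ℕ) : ℝ) := by
  rw [ydeg, Nat.cast_sum]

lemma h0_homotopy {b : Omega d} (hb : ExtDeg d 0 b) (m : Mi d) (S : Finset (Fin d))
    (x : Fin d → ℝ) :
    deltaInv d (deltaOp d b) m S x = b m S x - ofFun d (b 0 ∅) m S x := by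
  rcases Finset.eq_empty_or_nonempty S with rfl | hS
  · by_cases hm : m = 0
    · subst hm
      unfold deltaInv ofFun
      simp
    · have hRHS : ofFun d (b 0 ∅) m ∅ x = 0 := by
        unfold ofFun
        rw [if_neg (by tauto)]
        rfl
      unfold deltaInv
      have hsum : ∀ k : Fin d, (if k ∉ (∅ : Finset (Fin d)) ∧ 1 ≤ m k then
          sgn d k ∅ * deltaOp d b (m - Finsupp.single k 1) (insert k ∅) x else 0)
          = (m k : ℝ) * b m ∅ x := by
        intro k
        by_cases hk : 1 ≤ m k
        · rw [if_pos ⟨Finset.notMem_empty k, hk⟩]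
          unfold deltaOp
          rw [show insert k (∅ : Finset (Fin d)) = {k} from rfl,
            Finset.sum_singleton, Finset.erase_singleton, sub_single_add hk,
            sgn_empty]
          have hc : (((m - Finsupp.single k 1 : Mi d) k : ℕ) : ℝ) + 1 = (m k : ℝ) := by
            rw [Finsupp.tsub_apply, Finsupp.single_apply, if_pos rfl]
            exact cast_sub_one_add_one hk
          rw [hc]
          ring
        · rw [if_neg (by tauto)]
          have h0 : m k = 0 := by omega
          rw [h0]
          simp
      rw [Finset.sum_congr rfl fun k _ => hsum k, ← Finset.sum_mul, ← ydeg_cast,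
        hRHS, sub_zero]
      have hne : ((ydeg d m : ℕ) : ℝ) ≠ 0 := by
        have : ydeg d m ≠ 0 := fun h => hm (ydeg_eq_zero h)
        exact_mod_cast this
      rw [Finset.card_empty, Nat.add_zero, inv_mul_cancel_left₀ hne]
  · -- S nonempty : both sides vanish
    have hScard : S.card ≠ 0 := by
      simpa [Finset.card_eq_zero] using hS.ne_empty
    have hRHS1 : b m S x = 0 := by rw [hb m S hScard]; rfl
    have hRHS2 : ofFun d (b 0 ∅) m S x = 0 := by
      unfold ofFun
      rw [if_neg (by rintro ⟨-, rfl⟩; exact hS.ne_empty rfl)]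
      rfl
    rw [hRHS1, hRHS2, sub_zero]
    unfold deltaInv
    have hz : ∀ k : Fin d, (if k ∉ S ∧ 1 ≤ m k then
        sgn d k S * deltaOp d b (m - Finsupp.single k 1) (insert k S) x else 0) = 0 := by
      intro k
      split
      · next hk =>
        have : deltaOp d b (m - Finsupp.single k 1) (insert k S) x = 0 := by
          unfold deltaOp
          refine Finset.sum_eq_zero fun i hi => ?_
          have : ((insert k S).erase i).card ≠ 0 := by
            rw [Finset.card_erase_of_mem hi, Finset.card_insert_of_notMem hk.1]
            omega
          rw [hb _ _ this]
          simp
        rw [this, mul_zero]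
      · rfl
    rw [Finset.sum_congr rfl fun k _ => hz k]
    simp

end Homotopy
section Homotopy1
variable {d : ℕ}

lemma h1_homotopy {c : Omega d} (hc : ExtDeg d 1 c) (hinv : deltaInv d c = 0)
    (m : Mi d) (S : Finset (Fin d)) (x : Fin d → ℝ) :
    deltaInv d (deltaOp d c) m S x = c m S x := by
  by_cases hcard : S.card = 1
  · obtain ⟨l, rfl⟩ := Finset.card_eq_one.mp hcard
    -- consequence of δ⁻¹c = 0 at (m + e_l, ∅)
    have hkey : c m {l} x + ∑ k ∈ Finset.univ.erase l,
        (if 1 ≤ m k then c (m - Finsupp.single k 1 + Finsupp.single l 1) {k} x else 0)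
        = 0 := by
      have h := congrFun (congrFun (congrFun hinv (m + Finsupp.single l 1)) ∅) x
      unfold deltaInv at h
      have hs : ∀ k : Fin d, (if k ∉ (∅ : Finset (Fin d)) ∧ 1 ≤ (m + Finsupp.single l 1 : Mi d) k
          then sgn d k ∅ * c (m + Finsupp.single l 1 - Finsupp.single k 1) (insert k ∅) x
          else 0)
          = (if 1 ≤ (m + Finsupp.single l 1 : Mi d) k
              then c (m + Finsupp.single l 1 - Finsupp.single k 1) {k} x else 0) := by
        intro k
        by_cases hk : 1 ≤ (m + Finsupp.single l 1 : Mi d) k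
        · rw [if_pos ⟨Finset.notMem_empty k, hk⟩, if_pos hk, sgn_empty, one_mul]
          rfl
        · rw [if_neg (by tauto), if_neg hk]
      rw [Finset.sum_congr rfl fun k _ => hs k] at h
      simp only [Pi.zero_apply] at h
      have hne : ((ydeg d (m + Finsupp.single l 1) + (∅ : Finset (Fin d)).card : ℕ) : ℝ)
          ≠ 0 := by
        rw [Finset.card_empty, Nat.add_zero, ydeg_add, ydeg_single]
        exact_mod_cast Nat.succ_ne_zero (ydeg d m)
      have hsum0 := (mul_eq_zero.mp h).resolve_left (inv_ne_zero hne)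
      rw [← Finset.add_sum_erase _ _ (Finset.mem_univ l)] at hsum0
      have hterml : (if 1 ≤ (m + Finsupp.single l 1 : Mi d) l
          then c (m + Finsupp.single l 1 - Finsupp.single l 1) {l} x else 0)
          = c m {l} x := by
        rw [if_pos (by rw [Finsupp.add_apply, Finsupp.single_apply, if_pos rfl]; omega),
          add_sub_single_self]
      rw [hterml] at hsum0
      have hconv : (∑ k ∈ Finset.univ.erase l,
          if 1 ≤ (m + Finsupp.single l 1 : Mi d) k
            then c (m + Finsupp.single l 1 - Finsupp.single k 1) {k} x else 0)
          = ∑ k ∈ Finset.univ.erase l,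
            (if 1 ≤ m k
              then c (m - Finsupp.single k 1 + Finsupp.single l 1) {k} x else 0) := by
        refine Finset.sum_congr rfl fun k hk => ?_
        have hkl : k ≠ l := (Finset.mem_erase.mp hk).1
        have happ : (m + Finsupp.single l 1 : Mi d) k = m k := by
          rw [Finsupp.add_apply, Finsupp.single_apply, if_neg (fun h => hkl h.symm)]
          omega
        rw [happ]
        split_ifs with h1
        · rw [addsub_comm l h1]
        · rfl
      rw [hconv] at hsum0
      exact hsum0
    -- the main computation
    unfold deltaInv
    have hT : ∀ k ∈ Finset.univ.erase l,
        (if k ∉ ({l} : Finset (Fin d)) ∧ 1 ≤ m k then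
          sgn d k {l} * deltaOp d c (m - Finsupp.single k 1) (insert k {l}) x else 0)
        = (if 1 ≤ m k then (m k : ℝ) else 0) * c m {l} x
          - ((m l : ℝ) + 1) *
            (if 1 ≤ m k then c (m - Finsupp.single k 1 + Finsupp.single l 1) {k} x
              else 0) := by
      intro k hk
      have hkl : k ≠ l := (Finset.mem_erase.mp hk).1
      have hknotin : k ∉ ({l} : Finset (Fin d)) := Finset.notMem_singleton.mpr hkl
      by_cases h1 : 1 ≤ m k
      · rw [if_pos ⟨hknotin, h1⟩, if_pos h1, if_pos h1]
        unfold deltaOp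
        rw [Finset.sum_insert hknotin, Finset.sum_singleton, Finset.erase_insert hknotin,
          Finset.erase_insert_of_ne hkl, Finset.erase_singleton, sub_single_add h1]
        have hck : (((m - Finsupp.single k 1 : Mi d) k : ℕ) : ℝ) + 1 = (m k : ℝ) := by
          rw [Finsupp.tsub_apply, Finsupp.single_apply, if_pos rfl]
          exact cast_sub_one_add_one h1
        have hcl : (((m - Finsupp.single k 1 : Mi d) l : ℕ) : ℝ) + 1 = (m l : ℝ) + 1 := by
          rw [Finsupp.tsub_apply, Finsupp.single_apply, if_neg hkl]
          simp
        rw [hck, hcl]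
        have hs1 : sgn d k {l} * sgn d k {l} = 1 := sgn_mul_self k {l}
        have hs2 : sgn d k {l} * sgn d l (insert k ∅) = -1 := by
          rw [show insert k (∅ : Finset (Fin d)) = {k} from rfl]
          exact sgn_singleton_mul hkl
        set s1 := sgn d k {l}
        set s2 := sgn d l (insert k ∅)
        set C := c m {l} x
        set Dv := c (m - Finsupp.single k 1 + Finsupp.single l 1) (insert k ∅) x with hDv
        have hDv' : c (m - Finsupp.single k 1 + Finsupp.single l 1) {k} x = Dv := by
          rw [hDv, show insert k (∅ : Finset (Fin d)) = {k} from rfl]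
        rw [hDv']
        linear_combination ((m k : ℝ) * C) * hs1 + (((m l : ℝ) + 1) * Dv) * hs2
      · rw [if_neg (by tauto), if_neg h1, if_neg h1]
        simp
    have hTl : (if l ∉ ({l} : Finset (Fin d)) ∧ 1 ≤ m l then
        sgn d l {l} * deltaOp d c (m - Finsupp.single l 1) (insert l {l}) x else 0) = 0 := by
      rw [if_neg (by simp)]
    rw [← Finset.add_sum_erase _ _ (Finset.mem_univ l), hTl, zero_add,
      Finset.sum_congr rfl hT, Finset.sum_sub_distrib, ← Finset.sum_mul, ← Finset.mul_sum]
    have e1 : (∑ k ∈ Finset.univ.erase l, if 1 ≤ m k then (m k : ℝ) else 0)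
        = ((ydeg d m : ℕ) : ℝ) - (m l : ℝ) := by
      have : ∀ k : Fin d, (if 1 ≤ m k then (m k : ℝ) else 0) = ((m k : ℕ) : ℝ) := by
        intro k
        split_ifs with h
        · rfl
        · have : m k = 0 := by omega
          simp [this]
      rw [Finset.sum_congr rfl fun k _ => this k, ydeg_cast,
        ← Finset.add_sum_erase _ _ (Finset.mem_univ l)]
      ring
    have e2 : (∑ k ∈ Finset.univ.erase l,
        if 1 ≤ m k then c (m - Finsupp.single k 1 + Finsupp.single l 1) {k} x else 0)
        = -(c m {l} x) := by linarith [hkey]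
    rw [e1, e2]
    have hcast : ((ydeg d m + ({l} : Finset (Fin d)).card : ℕ) : ℝ)
        = ((ydeg d m : ℕ) : ℝ) + 1 := by
      rw [Finset.card_singleton]
      push_cast
      ring
    rw [hcast]
    have hne : ((ydeg d m : ℕ) : ℝ) + 1 ≠ 0 := by positivity
    field_simp
    ring
  · -- S.card ≠ 1 : both sides vanish
    have hrhs : c m S x = 0 := by rw [hc m S hcard]; rfl
    rw [hrhs]
    unfold deltaInv
    have hz : ∀ k : Fin d, (if k ∉ S ∧ 1 ≤ m k then
        sgn d k S * deltaOp d c (m - Finsupp.single k 1) (insert k S) x else 0) = 0 := by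
      intro k
      split
      · next hk =>
        have : deltaOp d c (m - Finsupp.single k 1) (insert k S) x = 0 := by
          unfold deltaOp
          refine Finset.sum_eq_zero fun i hi => ?_
          have : ((insert k S).erase i).card ≠ 1 := by
            rw [Finset.card_erase_of_mem hi, Finset.card_insert_of_notMem hk.1]
            omega
          rw [hc _ _ this]
          simp
        rw [this, mul_zero]
      · rfl
    rw [Finset.sum_congr rfl fun k _ => hz k]
    simp

end Homotopy1
section Flat
variable {d : ℕ} {Γ : Christoffel d} {A : VF1 d}

lemma extDeg_neg {q : ℕ} {a : Omega d} (ha : ExtDeg d q a) : ExtDeg d q (-a) := by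
  intro m S hS
  show -(a m S) = 0
  rw [ha m S hS, neg_zero]

lemma deltaInv_sub (u v : Omega d) : deltaInv d (u - v) = deltaInv d u - deltaInv d v := by
  funext m S x
  show _ = deltaInv d u m S x - deltaInv d v m S x
  unfold deltaInv
  rw [← mul_sub, ← Finset.sum_sub_distrib]
  congr 1
  refine Finset.sum_congr rfl fun k _ => ?_
  split_ifs with h
  · show sgn d k S * (u _ _ x - v _ _ x) = _
    ring
  · ring

lemma gop_fix_zero (hlow : LowDegVanish d A) {c : Omega d} (hfix : c = Gop Γ A c) :
    c = 0 := by
  have key : ∀ p (m : Mi d) S, ydeg d m < p → c m S = 0 := by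
    intro p
    induction p with
    | zero => intro m S hm; omega
    | succ p ih =>
      intro m S hm
      calc c m S = Gop Γ A c m S := congrFun (congrFun hfix m) S
        _ = Gop Γ A 0 m S := Gop_congr hlow (fun m' S' hm' => ih m' S' (by omega)) S
        _ = 0 := by rw [Gop_zero]; rfl
  funext m S
  exact key (ydeg d m + 1) m S (Nat.lt_succ_self _)

lemma delta_eq_of_flat {a : Omega d} (hD : Dfed d Γ A a = 0) :
    deltaOp d a = nablaOp d Γ a + vact d A a := by
  have h : nablaOp d Γ a - deltaOp d a + vact d A a = 0 := hD
  funext m S x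
  have := congrFun (congrFun (congrFun h m) S) x
  simp only [Pi.add_apply, Pi.sub_apply, Pi.zero_apply] at this
  show deltaOp d a m S x = nablaOp d Γ a m S x + vact d A a m S x
  linarith

lemma fix_of_flat {a₀ : (Fin d → ℝ) → ℝ} {a : Omega d}
    (h : IsFlatSection d Γ A a₀ a) : a = Fop Γ A a₀ a := by
  obtain ⟨hdeg, hsm, hD, hsig⟩ := h
  have hδ := delta_eq_of_flat hD
  funext m S x
  show a m S x = (ofFun d a₀ + Gop Γ A a) m S x
  have h0 := h0_homotopy hdeg m S x
  unfold Gop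
  rw [← hδ]
  show a m S x = ofFun d a₀ m S x + deltaInv d (deltaOp d a) m S x
  rw [h0, show a 0 ∅ = a₀ from hsig]
  ring

lemma flat_unique (hlow : LowDegVanish d A) {a₀ : (Fin d → ℝ) → ℝ} {a a' : Omega d}
    (ha : a = Fop Γ A a₀ a) (ha' : a' = Fop Γ A a₀ a') : a = a' := by
  have key : ∀ p (m : Mi d) S, ydeg d m < p → a m S = a' m S := by
    intro p
    induction p with
    | zero => intro m S hm; omega
    | succ p ih =>
      intro m S hm
      calc a m S = Fop Γ A a₀ a m S := congrFun (congrFun ha m) S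
        _ = Fop Γ A a₀ a' m S := Fop_congr hlow (fun m' S' hm' => ih m' S' (by omega)) S
        _ = a' m S := (congrFun (congrFun ha' m) S).symm
  funext m S
  exact key (ydeg d m + 1) m S (Nat.lt_succ_self _)

lemma sol_isFlat (hΓ : SmoothGamma d Γ) (hA : SmoothVF1 d A) (hlow : LowDegVanish d A)
    (hnil : Nilpotent d Γ A) {a₀ : (Fin d → ℝ) → ℝ} (h₀ : ContDiff ℝ (⊤ : ℕ∞) a₀) :
    IsFlatSection d Γ A a₀ (sol Γ A a₀) := by
  set a := sol Γ A a₀ with ha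
  have hfix : a = Fop Γ A a₀ a := sol_fixed Γ A a₀ hlow
  have hdeg : ExtDeg d 0 a := extDeg_sol Γ A a₀
  have hsm : Smooth d a := smooth_sol Γ A a₀ hΓ hA h₀
  have hsig : sigmaOm d a = a₀ := sigma_sol Γ A a₀
  refine ⟨hdeg, hsm, ?_, hsig⟩
  -- D a = 0
  set c := Dfed d Γ A a with hc
  have hGa : Gop Γ A a = a - ofFun d a₀ := by
    conv_rhs => rw [hfix]
    show Gop Γ A a = (ofFun d a₀ + Gop Γ A a) - ofFun d a₀
    ring
  have hdd : deltaInv d (deltaOp d a) = a - ofFun d a₀ := by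
    funext m S x
    show _ = a m S x - ofFun d a₀ m S x
    rw [h0_homotopy hdeg m S x, show a 0 ∅ = a₀ from hsig]
  have hcrepr : c = (nablaOp d Γ a + vact d A a) - deltaOp d a := by
    show nablaOp d Γ a - deltaOp d a + vact d A a = _
    ring
  have hcinv : deltaInv d c = 0 := by
    rw [hcrepr, deltaInv_sub, hdd]
    show deltaInv d (nablaOp d Γ a + vact d A a) - (a - ofFun d a₀) = 0
    have : deltaInv d (nablaOp d Γ a + vact d A a) = Gop Γ A a := rfl
    rw [this, hGa]
    ring
  have hcdeg : ExtDeg d 1 c := by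
    have h1 : ExtDeg d 1 (nablaOp d Γ a) := extDeg_nabla hdeg
    have h2 : ExtDeg d 1 (deltaOp d a) := extDeg_delta hdeg
    have h3 : ExtDeg d 1 (vact d A a) := extDeg_vact hdeg
    intro m S hS
    show nablaOp d Γ a m S - deltaOp d a m S + vact d A a m S = 0
    rw [h1 m S hS, h2 m S hS, h3 m S hS]
    ring
  have hDc : Dfed d Γ A c = 0 := hnil a hsm
  have hδc := delta_eq_of_flat hDc
  have hcfix : c = Gop Γ A c := by
    funext m S x
    have := h1_homotopy hcdeg hcinv m S x
    rw [← this, hδc]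
    rfl
  exact gop_fix_zero hlow hcfix

/-- Existence and uniqueness of flat sections. -/
lemma exists_unique_flat (hΓ : SmoothGamma d Γ) (hA : SmoothVF1 d A)
    (hlow : LowDegVanish d A) (hnil : Nilpotent d Γ A)
    {a₀ : (Fin d → ℝ) → ℝ} (h₀ : ContDiff ℝ (⊤ : ℕ∞) a₀) :
    IsFlatSection d Γ A a₀ (sol Γ A a₀) ∧
      (sol Γ A a₀ = ofFun d a₀ + deltaInv d (nablaOp d Γ (sol Γ A a₀) + vact d A (sol Γ A a₀))) ∧
      ∀ a' : Omega d, IsFlatSection d Γ A a₀ a' → a' = sol Γ A a₀ :=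
  ⟨sol_isFlat hΓ hA hlow hnil h₀, sol_fixed Γ A a₀ hlow,
    fun a' ha' => flat_unique hlow (fix_of_flat ha') (sol_fixed Γ A a₀ hlow)⟩

end Flat
section Series
variable {d : ℕ}

/-- formal `∂/∂y^l` on coefficient series -/
def Dy (l : Fin d) (φ : MvPowerSeries (Fin d) ℝ) : MvPowerSeries (Fin d) ℝ :=
  fun m => (((m l : ℕ) : ℝ) + 1) * φ (m + Finsupp.single l 1)

lemma coeff_Dy (l : Fin d) (φ : MvPowerSeries (Fin d) ℝ) (m : Mi d) :
    MvPowerSeries.coeff m (Dy l φ)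
      = (((m l : ℕ) : ℝ) + 1)
        * MvPowerSeries.coeff (m + Finsupp.single l 1 : Mi d) φ := rfl

lemma shift_fst (l : Fin d) (m : Mi d) (f : Mi d → Mi d → ℝ) :
    ∑ p ∈ Finset.HasAntidiagonal.antidiagonal ((m + Finsupp.single l 1 : Mi d)), ((p.1 l : ℕ) : ℝ) * f p.1 p.2
    = ∑ q ∈ Finset.HasAntidiagonal.antidiagonal m,
        (((q.1 l : ℕ) : ℝ) + 1) * f (q.1 + Finsupp.single l 1) q.2 := by
  rw [← Finset.sum_filter_of_ne (p := fun p => 1 ≤ p.1 l)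
    (fun p _ hne => by
      by_contra h
      have h0 : p.1 l = 0 := by omega
      rw [h0] at hne
      simp at hne)]
  refine Finset.sum_nbij' (fun p => (p.1 - Finsupp.single l 1, p.2))
    (fun q => (q.1 + Finsupp.single l 1, q.2)) ?_ ?_ ?_ ?_ ?_
  · intro p hp
    rw [Finset.mem_filter, Finset.HasAntidiagonal.mem_antidiagonal] at hp
    rw [Finset.HasAntidiagonal.mem_antidiagonal]
    have h2 : (p.1 - Finsupp.single l 1) + p.2 + Finsupp.single l 1
        = m + Finsupp.single l 1 := by
      rw [add_right_comm, sub_single_add hp.2]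
      exact hp.1
    exact add_right_cancel h2
  · intro q hq
    rw [Finset.HasAntidiagonal.mem_antidiagonal] at hq
    rw [Finset.mem_filter, Finset.HasAntidiagonal.mem_antidiagonal]
    constructor
    · rw [add_right_comm, hq]
    · show 1 ≤ (q.1 + Finsupp.single l 1 : Mi d) l
      rw [Finsupp.add_apply, Finsupp.single_apply, if_pos rfl]
      omega
  · intro p hp
    rw [Finset.mem_filter] at hp
    have := sub_single_add hp.2
    exact Prod.ext (by simpa using this) rfl
  · intro q _
    exact Prod.ext (by simpa using add_sub_single_self q.1 l) rfl
  · intro p hp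
    rw [Finset.mem_filter] at hp
    have h1 : 1 ≤ p.1 l := hp.2
    have hc : (((p.1 - Finsupp.single l 1 : Mi d) l : ℕ) : ℝ) + 1 = ((p.1 l : ℕ) : ℝ) := by
      rw [Finsupp.tsub_apply, Finsupp.single_apply, if_pos rfl]
      exact cast_sub_one_add_one h1
    show ((p.1 l : ℕ) : ℝ) * f p.1 p.2 = _
    rw [show (p.1 - Finsupp.single l 1 + Finsupp.single l 1 : Mi d) = p.1 from
      sub_single_add h1, hc]

lemma shift_snd (l : Fin d) (m : Mi d) (f : Mi d → Mi d → ℝ) :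
    ∑ p ∈ Finset.HasAntidiagonal.antidiagonal ((m + Finsupp.single l 1 : Mi d)), ((p.2 l : ℕ) : ℝ) * f p.1 p.2
    = ∑ q ∈ Finset.HasAntidiagonal.antidiagonal m,
        (((q.2 l : ℕ) : ℝ) + 1) * f q.1 (q.2 + Finsupp.single l 1) := by
  rw [← Finset.sum_filter_of_ne (p := fun p => 1 ≤ p.2 l)
    (fun p _ hne => by
      by_contra h
      have h0 : p.2 l = 0 := by omega
      rw [h0] at hne
      simp at hne)]
  refine Finset.sum_nbij' (fun p => (p.1, p.2 - Finsupp.single l 1))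
    (fun q => (q.1, q.2 + Finsupp.single l 1)) ?_ ?_ ?_ ?_ ?_
  · intro p hp
    rw [Finset.mem_filter, Finset.HasAntidiagonal.mem_antidiagonal] at hp
    rw [Finset.HasAntidiagonal.mem_antidiagonal]
    have h2 : p.1 + (p.2 - Finsupp.single l 1) + Finsupp.single l 1
        = m + Finsupp.single l 1 := by
      rw [add_assoc, sub_single_add hp.2]
      exact hp.1
    exact add_right_cancel h2
  · intro q hq
    rw [Finset.HasAntidiagonal.mem_antidiagonal] at hq
    rw [Finset.mem_filter, Finset.HasAntidiagonal.mem_antidiagonal]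
    constructor
    · rw [← add_assoc, hq]
    · show 1 ≤ (q.2 + Finsupp.single l 1 : Mi d) l
      rw [Finsupp.add_apply, Finsupp.single_apply, if_pos rfl]
      omega
  · intro p hp
    rw [Finset.mem_filter] at hp
    exact Prod.ext rfl (by simpa using sub_single_add hp.2)
  · intro q _
    exact Prod.ext rfl (by simpa using add_sub_single_self q.2 l)
  · intro p hp
    rw [Finset.mem_filter] at hp
    have h1 : 1 ≤ p.2 l := hp.2
    have hc : (((p.2 - Finsupp.single l 1 : Mi d) l : ℕ) : ℝ) + 1 = ((p.2 l : ℕ) : ℝ) := by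
      rw [Finsupp.tsub_apply, Finsupp.single_apply, if_pos rfl]
      exact cast_sub_one_add_one h1
    show ((p.2 l : ℕ) : ℝ) * f p.1 p.2 = _
    rw [show (p.2 - Finsupp.single l 1 + Finsupp.single l 1 : Mi d) = p.2 from
      sub_single_add h1, hc]

lemma Dy_mul (l : Fin d) (φ ψ : MvPowerSeries (Fin d) ℝ) :
    Dy l (φ * ψ) = Dy l φ * ψ + φ * Dy l ψ := by
  classical
  apply MvPowerSeries.ext
  intro m
  rw [map_add, coeff_Dy, MvPowerSeries.coeff_mul, MvPowerSeries.coeff_mul,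
    MvPowerSeries.coeff_mul, Finset.mul_sum]
  have step1 : ∀ p ∈ Finset.HasAntidiagonal.antidiagonal ((m + Finsupp.single l 1 : Mi d)),
      (((m l : ℕ) : ℝ) + 1) * (MvPowerSeries.coeff p.1 φ * MvPowerSeries.coeff p.2 ψ)
      = ((p.1 l : ℕ) : ℝ) * (φ p.1 * ψ p.2) + ((p.2 l : ℕ) : ℝ) * (φ p.1 * ψ p.2) := by
    intro p hp
    rw [Finset.HasAntidiagonal.mem_antidiagonal] at hp
    have happ := congrFun (congrArg (α := Mi d) DFunLike.coe hp) l
    simp only [Finsupp.add_apply, Finsupp.single_apply, if_pos rfl] at happ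
    have hcast : ((m l : ℕ) : ℝ) + 1 = ((p.1 l : ℕ) : ℝ) + ((p.2 l : ℕ) : ℝ) := by
      rw [← Nat.cast_add, show p.1 l + p.2 l = m l + 1 from happ]
      push_cast
      ring
    rw [MvPowerSeries.coeff_apply, MvPowerSeries.coeff_apply, hcast]
    ring
  rw [Finset.sum_congr rfl step1, Finset.sum_add_distrib,
    shift_fst l m (fun a b => φ a * ψ b), shift_snd l m (fun a b => φ a * ψ b)]
  congr 1
  · refine Finset.sum_congr rfl fun q _ => ?_
    rw [coeff_Dy, MvPowerSeries.coeff_apply, MvPowerSeries.coeff_apply]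
    ring
  · refine Finset.sum_congr rfl fun q _ => ?_
    rw [coeff_Dy, MvPowerSeries.coeff_apply, MvPowerSeries.coeff_apply]
    ring

lemma coeff_X_mul' (j : Fin d) (φ : MvPowerSeries (Fin d) ℝ) (m : Mi d) :
    MvPowerSeries.coeff m (MvPowerSeries.X j * φ)
      = if 1 ≤ m j then MvPowerSeries.coeff (m - Finsupp.single j 1 : Mi d) φ else 0 := by
  classical
  rw [show (MvPowerSeries.X j : MvPowerSeries (Fin d) ℝ)
      = MvPowerSeries.monomial (Finsupp.single j 1) 1 from rfl,
    MvPowerSeries.coeff_monomial_mul]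
  by_cases hc : 1 ≤ m j
  · rw [if_pos (Finsupp.single_le_iff.mpr hc), if_pos hc, one_mul]
  · rw [if_neg (fun h => hc (Finsupp.single_le_iff.mp h)), if_neg hc]

end Series
section Bridge
variable {d : ℕ} {Γ : Christoffel d} {A : VF1 d}

/-- the series of coefficients of `y ↦ b(x,y)` (exterior degree-0 part) -/
def psb (b : Omega d) (x : Fin d → ℝ) : MvPowerSeries (Fin d) ℝ := fun m => b m ∅ x

/-- the series of coefficients of `∂b/∂x^l` -/
def pdps (l : Fin d) (b : Omega d) (x : Fin d → ℝ) : MvPowerSeries (Fin d) ℝ :=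
  fun m => pd d l (b m ∅) x

/-- the series of coefficients of `A^j_l` -/
def psA (A : VF1 d) (j l : Fin d) (x : Fin d → ℝ) : MvPowerSeries (Fin d) ℝ :=
  fun m => A j l m x

lemma delta_singleton (b : Omega d) (m : Mi d) (l : Fin d) (x : Fin d → ℝ) :
    deltaOp d b m {l} x = MvPowerSeries.coeff m (Dy l (psb b x)) := by
  unfold deltaOp
  rw [Finset.sum_singleton, Finset.erase_singleton, sgn_empty, coeff_Dy]
  show 1 * ((m l : ℝ) + 1) * b (m + Finsupp.single l 1) ∅ x = _
  rw [MvPowerSeries.coeff_apply]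
  show _ = ((m l : ℝ) + 1) * b (m + Finsupp.single l 1) ∅ x
  ring

lemma vact_singleton (b : Omega d) (m : Mi d) (l : Fin d) (x : Fin d → ℝ) :
    vact d A b m {l} x
      = ∑ j : Fin d, MvPowerSeries.coeff m (psA A j l x * Dy j (psb b x)) := by
  unfold vact
  rw [Finset.sum_singleton, Finset.erase_singleton, sgn_empty, one_mul]
  refine Finset.sum_congr rfl fun j _ => ?_
  rw [MvPowerSeries.coeff_mul]
  refine Finset.sum_congr rfl fun p _ => ?_
  rw [MvPowerSeries.coeff_apply, coeff_Dy, MvPowerSeries.coeff_apply]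
  show A j l p.1 x * ((p.2 j : ℝ) + 1) * b (p.2 + Finsupp.single j 1) ∅ x
    = psA A j l x p.1 * (((p.2 j : ℝ) + 1) * psb b x (p.2 + Finsupp.single j 1))
  show _ = A j l p.1 x * (((p.2 j : ℝ) + 1) * b (p.2 + Finsupp.single j 1) ∅ x)
  ring

lemma addsub_coeff {m : Mi d} {j k : Fin d} (hj : 1 ≤ m j) :
    (m + Finsupp.single k 1 - Finsupp.single j 1 : Mi d) k
      = (m - Finsupp.single j 1 : Mi d) k + 1 := by
  rcases eq_or_ne j k with rfl | hne
  · simp only [Finsupp.tsub_apply, Finsupp.add_apply, Finsupp.single_apply, if_pos rfl]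
    first
      | omega
      | (simp only [ite_true, eq_self_iff_true]; omega)
  · simp [Finsupp.tsub_apply, Finsupp.add_apply, Finsupp.single_apply, hne]
    first
      | omega
      | rfl
      | skip

lemma nabla_singleton (b : Omega d) (m : Mi d) (l : Fin d) (x : Fin d → ℝ) :
    nablaOp d Γ b m {l} x
      = MvPowerSeries.coeff m (pdps l b x)
        - ∑ j : Fin d, ∑ k : Fin d,
            Γ k l j x * MvPowerSeries.coeff m (MvPowerSeries.X j * Dy k (psb b x)) := by
  unfold nablaOp
  rw [Finset.sum_singleton, Finset.erase_singleton, sgn_empty, one_mul]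
  rw [MvPowerSeries.coeff_apply]
  show pd d l (b m ∅) x - _ = pdps l b x m - _
  rw [show pdps l b x m = pd d l (b m ∅) x from rfl]
  congr 1
  refine Finset.sum_congr rfl fun j _ => Finset.sum_congr rfl fun k _ => ?_
  rw [coeff_X_mul']
  by_cases hj : 1 ≤ m j
  · rw [if_pos hj, if_pos hj]
    dsimp only
    rw [coeff_Dy, MvPowerSeries.coeff_apply]
    have h1 : (m + Finsupp.single k 1 - Finsupp.single j 1 : Mi d)
        = m - Finsupp.single j 1 + Finsupp.single k 1 := addsub_comm k hj
    have h2 : (((m + Finsupp.single k 1 - Finsupp.single j 1 : Mi d) k : ℕ) : ℝ)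
        = (((m - Finsupp.single j 1 : Mi d) k : ℕ) : ℝ) + 1 := by
      rw [addsub_coeff hj]
      push_cast
      ring
    rw [h1] at h2 ⊢
    rw [h2, show psb b x (m - Finsupp.single j 1 + Finsupp.single k 1)
      = b (m - Finsupp.single j 1 + Finsupp.single k 1) ∅ x from rfl]
    ring
  · rw [if_neg hj, if_neg hj, mul_zero]

end Bridge
section Prod
variable {d : ℕ} {Γ : Christoffel d} {A : VF1 d}

lemma mulOm_empty_apply {t u : Omega d} (m : Mi d) (x : Fin d → ℝ) :
    mulOm d t u m ∅ x
      = ∑ p ∈ Finset.HasAntidiagonal.antidiagonal m, t p.1 ∅ x * u p.2 ∅ x := by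
  unfold mulOm
  rw [Finset.powerset_empty, Finset.sum_singleton]
  rw [show ((∅ : Finset (Fin d)) \ ∅) = ∅ from by simp]
  rw [show shuffleSgn d (∅ : Finset (Fin d)) ∅ = 1 from by simp [shuffleSgn]]
  rw [one_mul]

lemma extDeg_mulOm {t u : Omega d} (ht : ExtDeg d 0 t) (hu : ExtDeg d 0 u) :
    ExtDeg d 0 (mulOm d t u) := by
  intro m S hS
  funext x
  unfold mulOm
  refine Finset.sum_eq_zero fun T hT => ?_
  rcases Finset.eq_empty_or_nonempty T with rfl | hTne
  · have hSne : (S \ ∅).card ≠ 0 := by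
      rw [Finset.sdiff_empty]
      exact hS
    have : ∀ p : Mi d × Mi d, u p.2 (S \ ∅) x = 0 := fun p => by
      rw [hu _ _ hSne]; rfl
    rw [Finset.sum_congr rfl fun p _ => by rw [this p, mul_zero]]
    simp
  · have hTc : T.card ≠ 0 := fun h => hTne.ne_empty (Finset.card_eq_zero.mp h)
    have : ∀ p : Mi d × Mi d, t p.1 T x = 0 := fun p => by
      rw [ht _ _ hTc]; rfl
    rw [Finset.sum_congr rfl fun p _ => by rw [this p, zero_mul]]
    simp

lemma psb_mulOm (t u : Omega d) (x : Fin d → ℝ) :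
    psb (mulOm d t u) x = psb t x * psb u x := by
  apply MvPowerSeries.ext
  intro m
  rw [MvPowerSeries.coeff_mul, MvPowerSeries.coeff_apply]
  show mulOm d t u m ∅ x = _
  rw [mulOm_empty_apply m x]
  rfl

lemma pd_sum {ι : Type*} (s : Finset ι) (f : ι → (Fin d → ℝ) → ℝ)
    (hf : ∀ i ∈ s, ContDiff ℝ (⊤ : ℕ∞) (f i)) (l : Fin d) (x : Fin d → ℝ) :
    pd d l (fun y => ∑ i ∈ s, f i y) x = ∑ i ∈ s, pd d l (f i) x := by
  unfold pd
  rw [fderiv_fun_sum fun i hi => ((hf i hi).differentiable (by simp)).differentiableAt]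
  rw [ContinuousLinearMap.sum_apply]

lemma pd_mul (f g : (Fin d → ℝ) → ℝ) (hf : ContDiff ℝ (⊤ : ℕ∞) f)
    (hg : ContDiff ℝ (⊤ : ℕ∞) g) (l : Fin d) (x : Fin d → ℝ) :
    pd d l (fun y => f y * g y) x = pd d l f x * g x + f x * pd d l g x := by
  unfold pd
  rw [fderiv_fun_mul ((hf.differentiable (by simp)).differentiableAt)
    ((hg.differentiable (by simp)).differentiableAt)]
  rw [ContinuousLinearMap.add_apply, ContinuousLinearMap.smul_apply,
    ContinuousLinearMap.smul_apply, smul_eq_mul, smul_eq_mul]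
  ring

lemma pdps_mulOm {t u : Omega d} (hst : Smooth d t) (hsu : Smooth d u)
    (l : Fin d) (x : Fin d → ℝ) :
    pdps l (mulOm d t u) x = pdps l t x * psb u x + psb t x * pdps l u x := by
  apply MvPowerSeries.ext
  intro m
  rw [map_add, MvPowerSeries.coeff_mul, MvPowerSeries.coeff_mul]
  rw [show MvPowerSeries.coeff m (pdps l (mulOm d t u) x)
    = pd d l (mulOm d t u m ∅) x from rfl]
  have hfun : mulOm d t u m ∅
      = fun y => ∑ p ∈ Finset.HasAntidiagonal.antidiagonal m, t p.1 ∅ y * u p.2 ∅ y := by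
    funext y
    exact mulOm_empty_apply m y
  rw [hfun, pd_sum _ _ (fun p _ => (hst p.1 ∅).mul (hsu p.2 ∅)) l x]
  rw [Finset.sum_congr rfl fun p _ =>
    pd_mul (t p.1 ∅) (u p.2 ∅) (hst p.1 ∅) (hsu p.2 ∅) l x]
  rw [Finset.sum_add_distrib]
  rfl

lemma smooth_mulOm {t u : Omega d} (hst : Smooth d t) (hsu : Smooth d u) :
    Smooth d (mulOm d t u) := by
  intro m S
  unfold mulOm
  apply ContDiff.sum
  intro T _
  apply ContDiff.mul contDiff_const
  apply ContDiff.sum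
  intro p _
  exact (hst p.1 T).mul (hsu p.2 (S \ T))

lemma sigma_mulOm (t u : Omega d) : sigmaOm d (mulOm d t u) = sigmaOm d t * sigmaOm d u := by
  funext x
  show mulOm d t u 0 ∅ x = t 0 ∅ x * u 0 ∅ x
  rw [mulOm_empty_apply, Finsupp.antidiagonal_zero, Finset.sum_singleton]

end Prod
section ProdFlat
variable {d : ℕ} {Γ : Christoffel d} {A : VF1 d}

/-- the exterior-degree-one component of the Fedosov derivative, as a power series -/
def Dser (Γ : Christoffel d) (A : VF1 d) (b : Omega d) (l : Fin d) (x : Fin d → ℝ) :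
    MvPowerSeries (Fin d) ℝ :=
  fun m => nablaOp d Γ b m {l} x - deltaOp d b m {l} x + vact d A b m {l} x

lemma Dser_eq (b : Omega d) (l : Fin d) (x : Fin d → ℝ) :
    Dser Γ A b l x
      = (pdps l b x
          - ∑ j : Fin d, ∑ k : Fin d,
              MvPowerSeries.C (Γ k l j x) * (MvPowerSeries.X j * Dy k (psb b x)))
        - Dy l (psb b x)
        + ∑ j : Fin d, psA A j l x * Dy j (psb b x) := by
  apply MvPowerSeries.ext
  intro m
  rw [show MvPowerSeries.coeff m (Dser Γ A b l x)
    = nablaOp d Γ b m {l} x - deltaOp d b m {l} x + vact d A b m {l} x from rfl]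
  rw [map_add, map_sub, map_sub, map_sum, map_sum]
  rw [nabla_singleton b m l x, delta_singleton b m l x, vact_singleton b m l x]
  congr 2
  · congr 1
    refine Finset.sum_congr rfl fun j _ => ?_
    rw [map_sum]
    exact Finset.sum_congr rfl fun k _ => (MvPowerSeries.coeff_C_mul _ _ _).symm

lemma Dser_mulOm {t u : Omega d} (hst : Smooth d t) (hsu : Smooth d u)
    (l : Fin d) (x : Fin d → ℝ) :
    Dser Γ A (mulOm d t u) l x
      = Dser Γ A t l x * psb u x + psb t x * Dser Γ A u l x := by
  rw [Dser_eq, Dser_eq, Dser_eq, psb_mulOm, pdps_mulOm hst hsu]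
  set φ := psb t x
  set ψ := psb u x
  have hGsum : (∑ j : Fin d, ∑ k : Fin d,
        MvPowerSeries.C (Γ k l j x) * (MvPowerSeries.X j * Dy k (φ * ψ)))
      = (∑ j : Fin d, ∑ k : Fin d,
          MvPowerSeries.C (Γ k l j x) * (MvPowerSeries.X j * Dy k φ)) * ψ
        + φ * (∑ j : Fin d, ∑ k : Fin d,
            MvPowerSeries.C (Γ k l j x) * (MvPowerSeries.X j * Dy k ψ)) := by
    rw [Finset.sum_mul, Finset.mul_sum, ← Finset.sum_add_distrib]
    refine Finset.sum_congr rfl fun j _ => ?_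
    rw [Finset.sum_mul, Finset.mul_sum, ← Finset.sum_add_distrib]
    refine Finset.sum_congr rfl fun k _ => ?_
    rw [Dy_mul]
    ring
  have hAsum : (∑ j : Fin d, psA A j l x * Dy j (φ * ψ))
      = (∑ j : Fin d, psA A j l x * Dy j φ) * ψ
        + φ * (∑ j : Fin d, psA A j l x * Dy j ψ) := by
    rw [Finset.sum_mul, Finset.mul_sum, ← Finset.sum_add_distrib]
    refine Finset.sum_congr rfl fun j _ => ?_
    rw [Dy_mul]
    ring
  rw [hGsum, hAsum, Dy_mul]
  ring

lemma Dfed_mulOm {t u : Omega d} (ht : ExtDeg d 0 t) (hu : ExtDeg d 0 u)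
    (hst : Smooth d t) (hsu : Smooth d u)
    (hDt : Dfed d Γ A t = 0) (hDu : Dfed d Γ A u = 0) :
    Dfed d Γ A (mulOm d t u) = 0 := by
  have hser : ∀ (b : Omega d), Dfed d Γ A b = 0 → ∀ l x, Dser Γ A b l x = 0 := by
    intro b hb l x
    apply MvPowerSeries.ext
    intro m
    have h0 : nablaOp d Γ b m {l} x - deltaOp d b m {l} x + vact d A b m {l} x = 0 := by
      have := congrFun (congrFun (congrFun hb m) {l}) x
      unfold Dfed at this
      simpa using this
    rw [show MvPowerSeries.coeff m (Dser Γ A b l x)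
      = nablaOp d Γ b m {l} x - deltaOp d b m {l} x + vact d A b m {l} x from rfl, h0]
    rw [map_zero]
  funext m S x
  unfold Dfed
  show nablaOp d Γ (mulOm d t u) m S x - deltaOp d (mulOm d t u) m S x
      + vact d A (mulOm d t u) m S x = (0 : Omega d) m S x
  rw [show (0 : Omega d) m S x = 0 from rfl]
  by_cases hS : S.card = 1
  · obtain ⟨l, rfl⟩ := Finset.card_eq_one.mp hS
    rw [show nablaOp d Γ (mulOm d t u) m {l} x - deltaOp d (mulOm d t u) m {l} x
        + vact d A (mulOm d t u) m {l} x
      = MvPowerSeries.coeff m (Dser Γ A (mulOm d t u) l x) from rfl]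
    rw [Dser_mulOm hst hsu, hser t hDt l x, hser u hDu l x, zero_mul, mul_zero, add_zero,
      map_zero]
  · have he : ExtDeg d 0 (mulOm d t u) := extDeg_mulOm ht hu
    have h1 := congrFun (extDeg_nabla (Γ := Γ) he m S hS) x
    have h2 := congrFun (extDeg_delta he m S hS) x
    have h3 := congrFun (extDeg_vact (A := A) he m S hS) x
    simp only [Pi.zero_apply] at h1 h2 h3
    rw [h1, h2, h3]
    ring

end ProdFlat

/-- Flat sections of the Fedosov differential; zeroth cohomology.
For every smooth `a₀ ∈ C^∞(ℝ^d)` there is a unique `a ∈ Ω⁰` with `Da = 0` and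
`σ(a) = a₀`; it satisfies the recursion `a = a₀ + δ⁻¹(∇a + A·a)`. The resulting
map `τ` is bijective onto the space of `D`-flat elements of `Ω⁰`, with inverse
`σ`, and is an isomorphism of commutative algebras: `τ(a₀b₀) = τ(a₀)τ(b₀)`. -/
theorem flat_sections_tau (d : ℕ) (hd : 1 ≤ d) (Γ : Christoffel d)
    (hΓ : SmoothGamma d Γ) (hsym : TorsionFree d Γ)
    (A : VF1 d) (hA : SmoothVF1 d A) (hlow : LowDegVanish d A)
    (hdinv : DeltaInvVanish d A) (hnil : Nilpotent d Γ A) :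
    (∀ a₀ : (Fin d → ℝ) → ℝ, ContDiff ℝ (⊤ : ℕ∞) a₀ →
      ∃ a : Omega d,
        IsFlatSection d Γ A a₀ a ∧
        a = ofFun d a₀ + deltaInv d (nablaOp d Γ a + vact d A a) ∧
        ∀ a' : Omega d, IsFlatSection d Γ A a₀ a' → a' = a) ∧
    (∀ τ : ((Fin d → ℝ) → ℝ) → Omega d,
      (∀ a₀, ContDiff ℝ (⊤ : ℕ∞) a₀ → IsFlatSection d Γ A a₀ (τ a₀)) →
      (∀ b : Omega d, ExtDeg d 0 b → Smooth d b → Dfed d Γ A b = 0 →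
        τ (sigmaOm d b) = b) ∧
      (∀ a₀ b₀ : (Fin d → ℝ) → ℝ, ContDiff ℝ (⊤ : ℕ∞) a₀ → ContDiff ℝ (⊤ : ℕ∞) b₀ →
        τ (a₀ * b₀) = mulOm d (τ a₀) (τ b₀))) := by
  constructor
  · intro a₀ h₀
    obtain ⟨hflat, hfix, huniq⟩ := exists_unique_flat hΓ hA hlow hnil h₀
    exact ⟨sol Γ A a₀, hflat, hfix, huniq⟩
  · intro τ hτ
    constructor
    · intro b hdeg hsm hDb
      have hsig : ContDiff ℝ (⊤ : ℕ∞) (sigmaOm d b) := hsm 0 ∅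
      obtain ⟨hflat, hfix, huniq⟩ := exists_unique_flat hΓ hA hlow hnil hsig
      have h1 := huniq (τ (sigmaOm d b)) (hτ _ hsig)
      have h2 := huniq b ⟨hdeg, hsm, hDb, rfl⟩
      exact h1.trans h2.symm
    · intro a₀ b₀ h₀a h₀b
      obtain ⟨htd, hts, htD, htσ⟩ := hτ a₀ h₀a
      obtain ⟨hud, hus, huD, huσ⟩ := hτ b₀ h₀b
      have hmulflat : IsFlatSection d Γ A (a₀ * b₀) (mulOm d (τ a₀) (τ b₀)) := by
        refine ⟨extDeg_mulOm htd hud, smooth_mulOm hts hus,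
          Dfed_mulOm htd hud hts hus htD huD, ?_⟩
        rw [sigma_mulOm, htσ, huσ]
      have h₀ab : ContDiff ℝ (⊤ : ℕ∞) (a₀ * b₀) := h₀a.mul h₀b
      obtain ⟨hflat, hfix, huniq⟩ := exists_unique_flat hΓ hA hlow hnil h₀ab
      rw [huniq _ (hτ _ h₀ab), huniq _ hmulflat]
end FedosovModel
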